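/- Let ς ∈ (0,1], ε > 0, an integer j ≥ 1, and let d with ‖d‖ ≤ δ satisfy ς·φ̄ ≤ ΔT̄(d). If ΔT̄(d) ≤ (ς·ε/2)·δ^j/j! and |ΔT̄(w) − ΔT(w)| ≤ (ς·ε/2)·δ^j/j! for all w with ‖w‖ ≤ δ, then φ ≤ ε·δ^j/j!. -/

import Mathlib

noncomputable section

variable {E : Type*} [NormedAddCommGroup E] [InnerProductSpace ℝ E]

/-- A continuous `ℓ`-multilinear form is symmetric if its value is invariant
under any permutation of its arguments. -/
def SymmForm {E : Type*} [NormedAddCommGroup E] [InnerProductSpace ℝ E] (ℓ : ℕ)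
    (B : ContinuousMultilinearMap ℝ (fun _ : Fin ℓ => E) ℝ) : Prop :=
  ∀ (σ : Equiv.Perm (Fin ℓ)) (v : Fin ℓ → E), B (fun i => v (σ i)) = B v

/-- The (possibly inexact) Taylor decrement `ΔT(w) = −∑_{ℓ=1}^j (1/ℓ!) B_ℓ[w]^ℓ`. -/
def dT {E : Type*} [NormedAddCommGroup E] [InnerProductSpace ℝ E] (j : ℕ)
    (B : (ℓ : ℕ) → ContinuousMultilinearMap ℝ (fun _ : Fin ℓ => E) ℝ) (w : E) : ℝ :=
  -∑ ℓ ∈ Finset.Icc 1 j, (1 / (Nat.factorial ℓ : ℝ)) * B ℓ (fun _ => w)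

/-- The optimality measure `φ = sup_{‖w‖ ≤ δ} ΔT(w)`. -/
def phiOpt {E : Type*} [NormedAddCommGroup E] [InnerProductSpace ℝ E] (j : ℕ)
    (B : (ℓ : ℕ) → ContinuousMultilinearMap ℝ (fun _ : Fin ℓ => E) ℝ) (δ : ℝ) : ℝ :=
  sSup {y : ℝ | ∃ w : E, ‖w‖ ≤ δ ∧ y = dT j B w}

/-- The 'absolute' case (2.18) of Lemma 2.2: if `d` with `‖d‖ ≤ δ` satisfies
`ς·φ̄ ≤ ΔT̄(d)`, `ΔT̄(d) ≤ (ς·ε/2)·δ^j/j!` and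
`|ΔT̄(w) − ΔT(w)| ≤ (ς·ε/2)·δ^j/j!` for all `‖w‖ ≤ δ`, then `φ ≤ ε·δ^j/j!`. -/
theorem phi_le_absolute (j : ℕ) (hj : 1 ≤ j) (δ : ℝ) (hδ : 0 < δ)
    (A B : (ℓ : ℕ) → ContinuousMultilinearMap ℝ (fun _ : Fin ℓ => E) ℝ)
    (hsymA : ∀ ℓ ∈ Finset.Icc 1 j, SymmForm ℓ (A ℓ))
    (hsymB : ∀ ℓ ∈ Finset.Icc 1 j, SymmForm ℓ (B ℓ))
    (ς : ℝ) (hς : ς ∈ Set.Ioc (0 : ℝ) 1) (ε : ℝ) (hε : 0 < ε)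
    (d : E) (hd : ‖d‖ ≤ δ) (hφ : ς * phiOpt j B δ ≤ dT j B d)
    (hdT : dT j B d ≤ (ς * ε / 2) * δ ^ j / (Nat.factorial j : ℝ))
    (herr : ∀ w : E, ‖w‖ ≤ δ →
      |dT j B w - dT j A w| ≤ (ς * ε / 2) * δ ^ j / (Nat.factorial j : ℝ)) :
    phiOpt j A δ ≤ ε * δ ^ j / (Nat.factorial j : ℝ) := by

  obtain ⟨hς0, hς1⟩ := hς
  set c : ℝ := (ς * ε / 2) * δ ^ j / (Nat.factorial j : ℝ) with hc
  have hcpos : 0 ≤ c := by positivity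
  have hbdd : BddAbove {y : ℝ | ∃ w : E, ‖w‖ ≤ δ ∧ y = dT j B w} := by
    refine ⟨∑ ℓ ∈ Finset.Icc 1 j, (1 / (Nat.factorial ℓ : ℝ)) * (‖B ℓ‖ * δ ^ ℓ), ?_⟩
    rintro y ⟨w, hw, rfl⟩
    have : dT j B w ≤ |∑ ℓ ∈ Finset.Icc 1 j,
        (1 / (Nat.factorial ℓ : ℝ)) * B ℓ (fun _ => w)| := by
      rw [dT]; exact neg_le_abs _
    refine this.trans ((Finset.abs_sum_le_sum_abs _ _).trans
      (Finset.sum_le_sum fun ℓ _ => ?_))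
    rw [abs_mul]
    have h1 : |B ℓ (fun _ => w)| ≤ ‖B ℓ‖ * δ ^ ℓ := by
      have := (B ℓ).le_opNorm (fun _ => w)
      simp only [Real.norm_eq_abs] at this
      refine this.trans ?_
      have hprod : ∏ _i : Fin ℓ, ‖w‖ ≤ δ ^ ℓ := by
        calc ∏ _i : Fin ℓ, ‖w‖ = ‖w‖ ^ ℓ := by simp
          _ ≤ δ ^ ℓ := pow_le_pow_left₀ (norm_nonneg _) hw _
      exact mul_le_mul_of_nonneg_left hprod (B ℓ).opNorm_nonneg
    have h2 : |(1 : ℝ) / (Nat.factorial ℓ : ℝ)| = 1 / (Nat.factorial ℓ : ℝ) := by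
      rw [abs_of_nonneg]; positivity
    rw [h2]
    gcongr
  have hφbar : phiOpt j B δ ≤ c / ς := by
    have h1 : ς * phiOpt j B δ ≤ c := hφ.trans hdT
    rw [le_div_iff₀ hς0]
    linarith [h1, mul_comm ς (phiOpt j B δ)]
  refine Real.sSup_le ?_ (by positivity)
  rintro y ⟨w, hw, rfl⟩
  have h1 : dT j A w ≤ dT j B w + c := by
    have := herr w hw
    have := abs_le.mp this
    linarith
  have h2 : dT j B w ≤ phiOpt j B δ := le_csSup hbdd ⟨w, hw, rfl⟩
  have hcle : c / ς = (ε / 2) * δ ^ j / (Nat.factorial j : ℝ) := by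
    field_simp [hc]; rw [hc]; field_simp
  have hc2 : c ≤ (ε / 2) * δ ^ j / (Nat.factorial j : ℝ) := by
    rw [hc]
    have h3 : ς * ε / 2 ≤ ε / 2 := by nlinarith
    gcongr
  have : phiOpt j B δ ≤ (ε / 2) * δ ^ j / (Nat.factorial j : ℝ) := hφbar.trans_eq hcle
  calc dT j A w ≤ phiOpt j B δ + c := by linarith
    _ ≤ (ε / 2) * δ ^ j / (Nat.factorial j : ℝ)
        + (ε / 2) * δ ^ j / (Nat.factorial j : ℝ) := by linarith
    _ = ε * δ ^ j / (Nat.factorial j : ℝ) := by ring
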